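/- Let n ≥ 1 be a natural number and let (q, p) ∈ ℝ² with (q, p) ≠ (0, 0). Set r := √(q² + p²) and define f(q, p) := r · T_n(q/r) − 1 and g(q, p) := p · U_{n−1}(q/r), where T_n and U_{n−1} are the Chebyshev polynomials of the first and second kind. Then f and g are differentiable at (q, p) and their canonical Poisson bracket equals n: (∂f/∂q)(q,p) · (∂g/∂p)(q,p) − (∂f/∂p)(q,p) · (∂g/∂q)(q,p) = n. (The bracket computation {Φ¹_n, Φ²_n} = n of the paper's Example 1 on the punctured plane.) -/

import Mathlib

open Polynomial


lemma cheb_pyth (n : ℕ) :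
    (Chebyshev.T ℝ (n : ℤ)) ^ 2 + (1 - X ^ 2) * (Chebyshev.U ℝ ((n : ℤ) - 1)) ^ 2 = 1 := by
  induction n with
  | zero => simp [Chebyshev.T_zero, Chebyshev.U_neg_one]
  | succ k ih =>
    have h1 := Chebyshev.T_eq_X_mul_T_sub_pol_U ℝ ((k : ℤ) - 1)
    have h2 := Chebyshev.U_eq_X_mul_U_add_T ℝ ((k : ℤ) - 1)
    simp only [show ((k:ℤ) - 1) + 2 = (k:ℤ) + 1 from by ring,
      show ((k:ℤ) - 1) + 1 = (k:ℤ) from by ring] at h1 h2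
    push_cast
    simp only [show ((k:ℤ) + 1) - 1 = (k:ℤ) from by ring]
    linear_combination ih
      + (Chebyshev.T ℝ ((k:ℤ)+1) + X * Chebyshev.T ℝ (k:ℤ)
          - (1 - X^2) * Chebyshev.U ℝ ((k:ℤ)-1)) * h1
      + (1 - X^2) * (Chebyshev.U ℝ (k:ℤ) + X * Chebyshev.U ℝ ((k:ℤ)-1)
          + Chebyshev.T ℝ (k:ℤ)) * h2

lemma cheb_key (n : ℕ) :
    (X : ℝ[X]) * Chebyshev.T ℝ (n : ℤ) * Chebyshev.U ℝ ((n : ℤ) - 1)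
      + (1 - X ^ 2) * (derivative (Chebyshev.T ℝ (n : ℤ)) * Chebyshev.U ℝ ((n : ℤ) - 1)
          - Chebyshev.T ℝ (n : ℤ) * derivative (Chebyshev.U ℝ ((n : ℤ) - 1)))
      = (n : ℝ[X]) := by
  have A := Chebyshev.T_derivative_eq_U (R := ℝ) (n : ℤ)
  have B := Chebyshev.add_one_mul_T_eq_poly_in_U (R := ℝ) ((n : ℤ) - 1)
  simp only [show ((n:ℤ) - 1) + 1 = (n:ℤ) from by ring] at B
  have C := cheb_pyth n
  push_cast at A B ⊢
  linear_combination (norm := ring_nf)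
    (1 - X^2) * Chebyshev.U ℝ ((n:ℤ)-1) * A - Chebyshev.T ℝ (n:ℤ) * B + (n : ℝ[X]) * C

set_option maxHeartbeats 1000000 in
/-- For `n ≥ 1` and `(q, p) ≠ (0, 0)` in `ℝ²`, with
`r := √(q² + p²)`, the functions `f(q,p) = r * T_n(q/r) − 1` and
`g(q,p) = p * U_{n−1}(q/r)` (Chebyshev polynomials of the first and second kind)
are differentiable at `(q, p)` and their canonical Poisson bracket equals `n`:
`∂f/∂q ∂g/∂p − ∂f/∂p ∂g/∂q = n`. -/
theorem chebyshev_constraints_poisson_bracket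
    (n : ℕ) (hn : 1 ≤ n) (q p : ℝ) (hqp : (q, p) ≠ ((0 : ℝ), (0 : ℝ)))
    (f g : ℝ × ℝ → ℝ)
    (hf : f = fun x : ℝ × ℝ =>
      Real.sqrt (x.1 ^ 2 + x.2 ^ 2) *
        (Polynomial.Chebyshev.T ℝ (n : ℤ)).eval
          (x.1 / Real.sqrt (x.1 ^ 2 + x.2 ^ 2)) - 1)
    (hg : g = fun x : ℝ × ℝ =>
      x.2 *
        (Polynomial.Chebyshev.U ℝ ((n : ℤ) - 1)).eval
          (x.1 / Real.sqrt (x.1 ^ 2 + x.2 ^ 2))) :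
    DifferentiableAt ℝ f (q, p) ∧ DifferentiableAt ℝ g (q, p) ∧
    fderiv ℝ f (q, p) (1, 0) * fderiv ℝ g (q, p) (0, 1) -
        fderiv ℝ f (q, p) (0, 1) * fderiv ℝ g (q, p) (1, 0) = n := by
  subst hf hg
  have hne : q ^ 2 + p ^ 2 ≠ 0 := by
    intro h
    apply hqp
    have hq : q = 0 := by nlinarith [sq_nonneg q, sq_nonneg p]
    have hp : p = 0 := by nlinarith [sq_nonneg q, sq_nonneg p]
    simp [hq, hp]
  set r := Real.sqrt (q ^ 2 + p ^ 2) with hrdef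
  have hr : 0 < r := Real.sqrt_pos.2 (lt_of_le_of_ne (by positivity) (Ne.symm hne))
  have hr2 : r ^ 2 = q ^ 2 + p ^ 2 := Real.sq_sqrt (by positivity)
  have h1 : HasFDerivAt (fun x : ℝ × ℝ => x.1) (ContinuousLinearMap.fst ℝ ℝ ℝ) (q, p) :=
    hasFDerivAt_fst
  have h2 : HasFDerivAt (fun x : ℝ × ℝ => x.2) (ContinuousLinearMap.snd ℝ ℝ ℝ) (q, p) :=
    hasFDerivAt_snd
  have hN : HasFDerivAt (fun x : ℝ × ℝ => x.1 ^ 2 + x.2 ^ 2)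
      (q • ContinuousLinearMap.fst ℝ ℝ ℝ + q • ContinuousLinearMap.fst ℝ ℝ ℝ
        + (p • ContinuousLinearMap.snd ℝ ℝ ℝ + p • ContinuousLinearMap.snd ℝ ℝ ℝ)) (q, p) := by
    simpa only [pow_two, Pi.mul_def, Pi.add_def] using (h1.mul h1).add (h2.mul h2)
  have hsq : HasDerivAt Real.sqrt (1 / (2 * r)) (q ^ 2 + p ^ 2) := Real.hasDerivAt_sqrt hne
  have hR : HasFDerivAt (fun x : ℝ × ℝ => Real.sqrt (x.1 ^ 2 + x.2 ^ 2))
      ((1 / (2 * r)) • (q • ContinuousLinearMap.fst ℝ ℝ ℝ + q • ContinuousLinearMap.fst ℝ ℝ ℝ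
        + (p • ContinuousLinearMap.snd ℝ ℝ ℝ + p • ContinuousLinearMap.snd ℝ ℝ ℝ))) (q, p) :=
    hsq.comp_hasFDerivAt (q, p) hN
  set LR := (1 / (2 * r)) • (q • ContinuousLinearMap.fst ℝ ℝ ℝ + q • ContinuousLinearMap.fst ℝ ℝ ℝ
        + (p • ContinuousLinearMap.snd ℝ ℝ ℝ + p • ContinuousLinearMap.snd ℝ ℝ ℝ)) with hLR
  have hRinv : HasFDerivAt (fun x : ℝ × ℝ => (Real.sqrt (x.1 ^ 2 + x.2 ^ 2))⁻¹)
      ((-(r ^ 2)⁻¹) • LR) (q, p) :=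
    (hasDerivAt_inv hr.ne').comp_hasFDerivAt (q, p) hR
  have hc : HasFDerivAt (fun x : ℝ × ℝ => x.1 / Real.sqrt (x.1 ^ 2 + x.2 ^ 2))
      (q • ((-(r ^ 2)⁻¹) • LR) + r⁻¹ • ContinuousLinearMap.fst ℝ ℝ ℝ) (q, p) := by
    simp only [div_eq_mul_inv]
    exact h1.mul hRinv
  set Lc := q • ((-(r ^ 2)⁻¹) • LR) + r⁻¹ • ContinuousLinearMap.fst ℝ ℝ ℝ with hLc
  set t := q / r with htdef
  set T : ℝ[X] := Polynomial.Chebyshev.T ℝ (n : ℤ) with hT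
  set U : ℝ[X] := Polynomial.Chebyshev.U ℝ ((n : ℤ) - 1) with hU
  have hTc : HasFDerivAt (fun x : ℝ × ℝ => T.eval (x.1 / Real.sqrt (x.1 ^ 2 + x.2 ^ 2)))
      (T.derivative.eval t • Lc) (q, p) :=
    by have := (T.hasDerivAt t).comp_hasFDerivAt (q, p) hc; exact this
  have hUc : HasFDerivAt (fun x : ℝ × ℝ => U.eval (x.1 / Real.sqrt (x.1 ^ 2 + x.2 ^ 2)))
      (U.derivative.eval t • Lc) (q, p) :=
    by have := (U.hasDerivAt t).comp_hasFDerivAt (q, p) hc; exact this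
  have hF : HasFDerivAt (fun x : ℝ × ℝ =>
      Real.sqrt (x.1 ^ 2 + x.2 ^ 2) * T.eval (x.1 / Real.sqrt (x.1 ^ 2 + x.2 ^ 2)) - 1)
      (r • (T.derivative.eval t • Lc) + T.eval t • LR) (q, p) :=
    (hR.mul hTc).sub_const 1
  have hG : HasFDerivAt (fun x : ℝ × ℝ =>
      x.2 * U.eval (x.1 / Real.sqrt (x.1 ^ 2 + x.2 ^ 2)))
      (p • (U.derivative.eval t • Lc) + U.eval t • ContinuousLinearMap.snd ℝ ℝ ℝ) (q, p) :=
    h2.mul hUc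
  refine ⟨hF.differentiableAt, hG.differentiableAt, ?_⟩
  rw [hF.fderiv, hG.fderiv]
  have hkey := congrArg (Polynomial.eval t) (cheb_key n)
  simp only [ContinuousLinearMap.add_apply, ContinuousLinearMap.smul_apply,
    ContinuousLinearMap.coe_fst', ContinuousLinearMap.coe_snd', smul_eq_mul, hLR, hLc]
  simp only [eval_add, eval_mul, eval_sub, eval_pow, eval_X, eval_one, eval_natCast] at hkey
  rw [htdef] at hkey
  have hr0 : r ≠ 0 := hr.ne'
  set Tv := Polynomial.eval t T with hTv
  set Td := Polynomial.eval t (Polynomial.derivative T) with hTd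
  set Uv := Polynomial.eval t U with hUv
  set Ud := Polynomial.eval t (Polynomial.derivative U) with hUd
  simp only [mul_one, mul_zero, add_zero, zero_add, one_div]
  field_simp at hkey ⊢
  rw [show p ^ 2 = r ^ 2 - q ^ 2 by linarith]
  linear_combination 4 * r ^ 3 * hkey
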